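/- Let p be a positive integer, let f : ℝ^p → ℝ be L-smooth, let δ > 0 and w ∈ ℝ^p, and let v, v' be independent random vectors each uniformly distributed on the unit sphere S_{p−1} = {v ∈ ℝ^p : ‖v‖ = 1}. Then E[(f(w + δv) − f(w + δv'))²] ≤ (3/2) L² δ⁴ + 12 δ² ‖∇f(w)‖². -/

import Mathlib

open MeasureTheory Metric ProbabilityTheory

section Descent
open intervalIntegral
lemma fderiv_apply_eq_inner_gradient {E : Type*} [NormedAddCommGroup E]
    [InnerProductSpace ℝ E] [CompleteSpace E] (f : E → ℝ) (x u : E) :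
    fderiv ℝ f x u = inner ℝ (gradient f x) u := by
  rw [gradient]
  simp

lemma descent_lemma {E : Type*} [NormedAddCommGroup E] [InnerProductSpace ℝ E]
    [CompleteSpace E] (f : E → ℝ) {L : ℝ} (hL : 0 ≤ L)
    (hdiff : Differentiable ℝ f)
    (hlip : LipschitzWith L.toNNReal (fun x => gradient f x)) (x u : E) :
    |f (x + u) - f x - inner ℝ (gradient f x) u| ≤ L / 2 * ‖u‖ ^ 2 := by
  set φ : ℝ → ℝ := fun t => (inner ℝ (gradient f (x + t • u)) u : ℝ) with hφ
  have hcontg : Continuous fun y => gradient f y := hlip.continuous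
  have hcontφ : Continuous φ := by
    exact ((hcontg.comp (by continuity)).inner continuous_const)
  have hderiv : ∀ t ∈ Set.uIcc (0:ℝ) 1,
      HasDerivAt (fun t : ℝ => f (x + t • u)) (φ t) t := by
    intro t _
    have h1 : HasDerivAt (fun t : ℝ => x + t • u) u t := by
      simpa using ((hasDerivAt_id t).smul_const u).const_add x
    have h2 : HasFDerivAt f (fderiv ℝ f (x + t • u)) (x + t • u) :=
      (hdiff _).hasFDerivAt
    have := h2.comp_hasDerivAt t h1
    rw [fderiv_apply_eq_inner_gradient] at this
    exact this
  have hint : IntervalIntegrable φ volume 0 1 := hcontφ.intervalIntegrable 0 1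
  have heq : ∫ t in (0:ℝ)..1, φ t = f (x + u) - f x := by
    have := integral_eq_sub_of_hasDerivAt hderiv hint
    simpa using this
  have hconst : ∫ t in (0:ℝ)..1, (inner ℝ (gradient f x) u : ℝ)
      = inner ℝ (gradient f x) u := by simp
  have hdiff_eq : f (x + u) - f x - inner ℝ (gradient f x) u
      = ∫ t in (0:ℝ)..1, (φ t - inner ℝ (gradient f x) u) := by
    rw [intervalIntegral.integral_sub hint (intervalIntegrable_const), heq, hconst]
  rw [hdiff_eq]
  have hb : ∀ t ∈ Set.Icc (0:ℝ) 1, ‖φ t - (inner ℝ (gradient f x) u : ℝ)‖ ≤ L * t * ‖u‖ ^ 2 := by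
    intro t ht
    have h1 : φ t - inner ℝ (gradient f x) u
        = (inner ℝ (gradient f (x + t • u) - gradient f x) u : ℝ) := by
      rw [inner_sub_left]
    rw [h1]
    have h2 : ‖gradient f (x + t • u) - gradient f x‖ ≤ L * (t * ‖u‖) := by
      have := hlip.dist_le_mul (x + t • u) x
      calc ‖gradient f (x + t • u) - gradient f x‖ ≤ L.toNNReal * ‖t • u‖ := by
            simpa [dist_eq_norm, add_sub_cancel_left] using this
        _ ≤ L * (t * ‖u‖) := by
            rw [norm_smul, Real.norm_eq_abs, abs_of_nonneg ht.1]
            exact mul_le_mul_of_nonneg_right (by simp [Real.coe_toNNReal _ hL]) (mul_nonneg ht.1 (norm_nonneg _))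
    calc ‖(inner ℝ (gradient f (x + t • u) - gradient f x) u : ℝ)‖
        ≤ ‖gradient f (x + t • u) - gradient f x‖ * ‖u‖ := norm_inner_le_norm _ _
      _ ≤ L * (t * ‖u‖) * ‖u‖ := mul_le_mul_of_nonneg_right h2 (norm_nonneg _)
      _ = L * t * ‖u‖ ^ 2 := by ring
  calc |∫ t in (0:ℝ)..1, (φ t - inner ℝ (gradient f x) u)|
      ≤ ∫ t in (0:ℝ)..1, L * t * ‖u‖ ^ 2 := by
        have hae : ∀ᵐ t ∂(volume.restrict (Set.uIoc (0:ℝ) 1)),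
            ‖φ t - (inner ℝ (gradient f x) u : ℝ)‖ ≤ L * t * ‖u‖ ^ 2 := by
          filter_upwards [ae_restrict_mem measurableSet_uIoc] with t ht
          exact hb t ⟨le_of_lt (by simpa using ht.1), by simpa using ht.2⟩
        have := intervalIntegral.norm_integral_le_of_norm_le zero_le_one
          (by rw [← Set.uIoc_of_le zero_le_one]; exact (ae_restrict_iff' measurableSet_uIoc).mp hae)
          (((continuous_const.mul continuous_id).mul continuous_const).intervalIntegrable 0 1)
        exact this
    _ = L / 2 * ‖u‖ ^ 2 := by
        have : (∫ t in (0:ℝ)..1, L * t * ‖u‖ ^ 2) = (∫ t in (0:ℝ)..1, t) * (L * ‖u‖ ^ 2) := by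
          rw [← intervalIntegral.integral_mul_const]
          congr 1; ext t; ring
        rw [this, integral_id]
        ring
end Descent

/-- The uniform (normalized surface) probability measure on the unit sphere
`S_{p-1} ⊆ ℝ^p`, viewed as a measure on the ambient space. -/
noncomputable def sphereUniform (p : ℕ) : Measure (EuclideanSpace ℝ (Fin p)) :=
  ((volume : Measure (EuclideanSpace ℝ (Fin p))).toSphere Set.univ)⁻¹ •
    Measure.map Subtype.val (volume : Measure (EuclideanSpace ℝ (Fin p))).toSphere

lemma sphereUniform_compl_sphere (p : ℕ) :
    sphereUniform p ((sphere (0 : EuclideanSpace ℝ (Fin p)) 1)ᶜ) = 0 := by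
  have hS : MeasurableSet ((sphere (0 : EuclideanSpace ℝ (Fin p)) 1)ᶜ) :=
    (isClosed_sphere).measurableSet.compl
  rw [sphereUniform, Measure.smul_apply,
    Measure.map_apply measurable_subtype_coe hS]
  have : (Subtype.val ⁻¹' (sphere (0 : EuclideanSpace ℝ (Fin p)) 1)ᶜ :
      Set (sphere (0 : EuclideanSpace ℝ (Fin p)) 1)) = ∅ := by
    ext x; simp [x.2]
  rw [this]
  simp

/-- Second-moment bound on the difference of two perturbed function evaluations:
if `f` is `L`-smooth and `v, v'` are independent uniform samples from the unit sphere, then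
`E[(f(w + δv) - f(w + δv'))²] ≤ (3/2) L² δ⁴ + 12 δ² ‖∇f(w)‖²`. -/
theorem second_moment_perturbed_difference
    (p : ℕ) (hp : 0 < p) (f : EuclideanSpace ℝ (Fin p) → ℝ) (L : ℝ) (hL : 0 ≤ L)
    (hdiff : Differentiable ℝ f)
    (hlip : LipschitzWith L.toNNReal (fun x => gradient f x))
    (δ : ℝ) (hδ : 0 < δ) (w : EuclideanSpace ℝ (Fin p))
    (Ω : Type*) [MeasurableSpace Ω] (P : Measure Ω) [IsProbabilityMeasure P]
    (v v' : Ω → EuclideanSpace ℝ (Fin p)) (hv : Measurable v) (hv' : Measurable v')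
    (hvdist : Measure.map v P = sphereUniform p)
    (hv'dist : Measure.map v' P = sphereUniform p)
    (hindep : IndepFun v v' P) :
    ∫ ω, (f (w + δ • v ω) - f (w + δ • v' ω)) ^ 2 ∂P
      ≤ (3 / 2) * L ^ 2 * δ ^ 4 + 12 * δ ^ 2 * ‖gradient f w‖ ^ 2 := by
  set C : ℝ := (3 / 2) * L ^ 2 * δ ^ 4 + 12 * δ ^ 2 * ‖gradient f w‖ ^ 2 with hC
  have hS : MeasurableSet ((sphere (0 : EuclideanSpace ℝ (Fin p)) 1)ᶜ) :=
    (isClosed_sphere).measurableSet.compl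
  -- a.e. norms equal 1
  have hv1 : ∀ᵐ ω ∂P, ‖v ω‖ = 1 := by
    have h0 : P (v ⁻¹' (sphere (0 : EuclideanSpace ℝ (Fin p)) 1)ᶜ) = 0 := by
      rw [← Measure.map_apply hv hS, hvdist, sphereUniform_compl_sphere]
    refine (measure_eq_zero_iff_ae_notMem.mp h0).mono fun ω hω => ?_
    simpa [mem_sphere_zero_iff_norm] using hω
  have hv'1 : ∀ᵐ ω ∂P, ‖v' ω‖ = 1 := by
    have h0 : P (v' ⁻¹' (sphere (0 : EuclideanSpace ℝ (Fin p)) 1)ᶜ) = 0 := by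
      rw [← Measure.map_apply hv' hS, hv'dist, sphereUniform_compl_sphere]
    refine (measure_eq_zero_iff_ae_notMem.mp h0).mono fun ω hω => ?_
    simpa [mem_sphere_zero_iff_norm] using hω
  -- pointwise bound
  have hpt : ∀ x y : EuclideanSpace ℝ (Fin p), ‖x‖ = 1 → ‖y‖ = 1 →
      (f (w + δ • x) - f (w + δ • y)) ^ 2 ≤ C := by
    intro x y hx hy
    set g : EuclideanSpace ℝ (Fin p) := gradient f w with hg
    have ha1 : |f (w + δ • x) - f w - inner ℝ g (δ • x)| ≤ L / 2 * δ ^ 2 := by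
      have := descent_lemma f hL hdiff hlip w (δ • x)
      simpa [norm_smul, hx, abs_of_pos hδ, mul_pow, hg] using this
    have ha2 : |f (w + δ • y) - f w - inner ℝ g (δ • y)| ≤ L / 2 * δ ^ 2 := by
      have := descent_lemma f hL hdiff hlip w (δ • y)
      simpa [norm_smul, hy, abs_of_pos hδ, mul_pow, hg] using this
    have hb : |(inner ℝ g (δ • x) : ℝ) - inner ℝ g (δ • y)| ≤ 2 * δ * ‖g‖ := by
      have h1 : (inner ℝ g (δ • x) : ℝ) - inner ℝ g (δ • y) = (inner ℝ g (δ • x - δ • y) : ℝ) := by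
        rw [inner_sub_right]
      rw [h1]
      calc |(inner ℝ g (δ • x - δ • y) : ℝ)| ≤ ‖g‖ * ‖δ • x - δ • y‖ := by
            exact abs_real_inner_le_norm g (δ • x - δ • y)
        _ ≤ ‖g‖ * (2 * δ) := by
            refine mul_le_mul_of_nonneg_left ?_ (norm_nonneg _)
            calc ‖δ • x - δ • y‖ ≤ ‖δ • x‖ + ‖δ • y‖ := norm_sub_le _ _
              _ = 2 * δ := by rw [norm_smul, norm_smul, hx, hy]; simp [abs_of_pos hδ]; ring
        _ = 2 * δ * ‖g‖ := by ring
    set a : ℝ := (f (w + δ • x) - f w - inner ℝ g (δ • x))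
      - (f (w + δ • y) - f w - inner ℝ g (δ • y)) with hadef
    set b : ℝ := (inner ℝ g (δ • x) : ℝ) - inner ℝ g (δ • y) with hbdef
    clear_value a b
    have hDab : f (w + δ • x) - f (w + δ • y) = a + b := by rw [hadef, hbdef]; ring
    have haabs : |a| ≤ L * δ ^ 2 := by
      calc |a| ≤ |f (w + δ • x) - f w - inner ℝ g (δ • x)|
            + |f (w + δ • y) - f w - inner ℝ g (δ • y)| := by rw [hadef]; exact abs_sub _ _
        _ ≤ L / 2 * δ ^ 2 + L / 2 * δ ^ 2 := add_le_add ha1 ha2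
        _ = L * δ ^ 2 := by ring
    rw [hDab, hC]
    have h1 : a ^ 2 ≤ (L * δ ^ 2) ^ 2 := sq_le_sq' (neg_le_of_abs_le haabs) (le_of_abs_le haabs)
    have h2 : b ^ 2 ≤ (2 * δ * ‖g‖) ^ 2 := sq_le_sq' (neg_le_of_abs_le hb) (le_of_abs_le hb)
    have key : (a + b) ^ 2 ≤ (3 / 2) * a ^ 2 + 3 * b ^ 2 := by
      nlinarith [sq_nonneg (a - 2 * b)]
    calc (a + b) ^ 2 ≤ (3 / 2) * a ^ 2 + 3 * b ^ 2 := key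
      _ ≤ (3 / 2) * (L * δ ^ 2) ^ 2 + 3 * (2 * δ * ‖g‖) ^ 2 := by linarith
      _ = (3 / 2) * L ^ 2 * δ ^ 4 + 12 * δ ^ 2 * ‖g‖ ^ 2 := by ring
  have hae : ∀ᵐ ω ∂P, (f (w + δ • v ω) - f (w + δ • v' ω)) ^ 2 ≤ C := by
    filter_upwards [hv1, hv'1] with ω h1 h2 using hpt _ _ h1 h2
  -- measurability and integrability
  have hm : AEStronglyMeasurable
      (fun ω => (f (w + δ • v ω) - f (w + δ • v' ω)) ^ 2) P := by
    have hfc : Continuous f := hdiff.continuous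
    have m1 : Measurable fun ω => f (w + δ • v ω) :=
      hfc.measurable.comp (measurable_const.add (hv.const_smul δ))
    have m2 : Measurable fun ω => f (w + δ • v' ω) :=
      hfc.measurable.comp (measurable_const.add (hv'.const_smul δ))
    exact ((m1.sub m2).pow_const 2).aestronglyMeasurable
  have hint : Integrable (fun ω => (f (w + δ • v ω) - f (w + δ • v' ω)) ^ 2) P := by
    refine Integrable.mono' (integrable_const C) hm ?_
    filter_upwards [hae] with ω h
    rw [Real.norm_eq_abs, abs_of_nonneg (sq_nonneg _)]
    exact h
  calc ∫ ω, (f (w + δ • v ω) - f (w + δ • v' ω)) ^ 2 ∂P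
      ≤ ∫ _, C ∂P := integral_mono_ae hint (integrable_const C) hae
    _ = C := by simp
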